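/- Let {(η_j, φ_j)}_{j=1}^d be an ensemble of d linearly independent unit vectors in ℂ^d with probabilities η_j > 0, and set ρ = ∑_j η_j |φ_j⟩⟨φ_j|. Then the POVM with E_0 = I − λ_min(ρ)·ρ^{−1} and E_j = η_j λ_min(ρ)·ρ^{−1}|φ_j⟩⟨φ_j|ρ^{−1} is a valid POVM (all elements positive semidefinite, summing to I), it satisfies tr(E_i |φ_j⟩⟨φ_j|) = (λ_min(ρ)/η_j)·δ_{ij} for i,j ∈ {1,…,d}, and the success probability ∑_j η_j tr(E_j |φ_j⟩⟨φ_j|) equals d·λ_min(ρ). -/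

import Mathlib

open Matrix BigOperators
open scoped ComplexOrder

section Helpers
variable {d : ℕ}

lemma ud_mul_vmv (A : Matrix (Fin d) (Fin d) ℂ) (v w : Fin d → ℂ) :
    A * vecMulVec v w = vecMulVec (A *ᵥ v) w := by
  ext i j
  simp [Matrix.mul_apply, vecMulVec_apply, mulVec, dotProduct, Finset.sum_mul, mul_assoc]

lemma ud_vmv_mul (v w : Fin d → ℂ) (A : Matrix (Fin d) (Fin d) ℂ) :
    vecMulVec v w * A = vecMulVec v (w ᵥ* A) := by
  ext i j
  simp [Matrix.mul_apply, vecMulVec_apply, vecMul, dotProduct, Finset.mul_sum, mul_assoc]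

lemma ud_vmv_mulVec (v w x : Fin d → ℂ) :
    vecMulVec v w *ᵥ x = (w ⬝ᵥ x) • v := by
  ext i
  simp only [vecMulVec_apply, mulVec, dotProduct, Pi.smul_apply, smul_eq_mul, Finset.sum_mul]
  exact Finset.sum_congr rfl fun k _ => by ring

lemma ud_vmv_mul_vmv (a b c e : Fin d → ℂ) :
    vecMulVec a b * vecMulVec c e = (b ⬝ᵥ c) • vecMulVec a e := by
  ext i j
  simp only [Matrix.mul_apply, vecMulVec_apply, Matrix.smul_apply, dotProduct, smul_eq_mul,
    Finset.sum_mul]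
  exact Finset.sum_congr rfl fun k _ => by ring

lemma ud_trace_vmv (v w : Fin d → ℂ) : (vecMulVec v w).trace = v ⬝ᵥ w := by
  simp [Matrix.trace, Matrix.diag, vecMulVec_apply, dotProduct]

lemma ud_sum_mulVec {ι : Type*} (s : Finset ι) (M : ι → Matrix (Fin d) (Fin d) ℂ)
    (x : Fin d → ℂ) : (∑ j ∈ s, M j) *ᵥ x = ∑ j ∈ s, M j *ᵥ x := by
  ext i
  simp only [mulVec, dotProduct, Finset.sum_apply, Finset.sum_mul]
  rw [Finset.sum_comm]
  exact Finset.sum_congr rfl fun k _ => by rw [Matrix.sum_apply, Finset.sum_mul]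

lemma ud_dotProduct_sum {ι : Type*} (v : Fin d → ℂ) (s : Finset ι) (f : ι → Fin d → ℂ) :
    v ⬝ᵥ (∑ j ∈ s, f j) = ∑ j ∈ s, v ⬝ᵥ f j := by
  simp only [dotProduct, Finset.sum_apply, Finset.mul_sum]
  rw [Finset.sum_comm]

lemma ud_vmv_psd (v : Fin d → ℂ) : (vecMulVec v (star v)).PosSemidef := by
  refine PosSemidef.of_dotProduct_mulVec_nonneg ?_ ?_
  · ext i j
    simp [conjTranspose_apply, vecMulVec_apply, mul_comm]
  · intro x
    rw [ud_vmv_mulVec, dotProduct_smul]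
    have h1 : star x ⬝ᵥ v = star (star v ⬝ᵥ x) := star_dotProduct _ _
    rw [h1, smul_eq_mul]
    exact mul_star_self_nonneg _

lemma ud_real_smul (c : ℝ) (M : Matrix (Fin d) (Fin d) ℂ) : c • M = (c : ℂ) • M := by
  ext i j
  simp [Complex.real_smul]

lemma ud_smul_psd {c : ℝ} (hc : 0 ≤ c) {M : Matrix (Fin d) (Fin d) ℂ}
    (hM : M.PosSemidef) : ((c : ℂ) • M).PosSemidef := by
  refine PosSemidef.of_dotProduct_mulVec_nonneg ?_ ?_
  · have : ((c:ℂ) • M)ᴴ = star (c:ℂ) • Mᴴ := conjTranspose_smul _ _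
    rw [IsHermitian, this, hM.1]
    simp
  · intro x
    rw [smul_mulVec, dotProduct_smul, smul_eq_mul]
    exact mul_nonneg (by exact_mod_cast Complex.zero_le_real.mpr hc) (hM.dotProduct_mulVec_nonneg x)

end Helpers

theorem unambiguous_discrimination_povm
    (d : ℕ) (hd : 0 < d)
    (φ : Fin d → (Fin d → ℂ)) (hind : LinearIndependent ℂ φ)
    (hunit : ∀ j, star (φ j) ⬝ᵥ φ j = 1)
    (η : Fin d → ℝ) (hη : ∀ j, 0 < η j) (hsum : ∑ j, η j = 1)
    (ρ : Matrix (Fin d) (Fin d) ℂ)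
    (hρ : ρ = ∑ j, η j • vecMulVec (φ j) (star (φ j)))
    (hρher : ρ.IsHermitian)
    (lam : ℝ)
    (hlam : lam = Finset.univ.inf'
      (Finset.univ_nonempty_iff.mpr (Fin.pos_iff_nonempty.mp hd)) hρher.eigenvalues)
    (E₀ : Matrix (Fin d) (Fin d) ℂ)
    (hE0 : E₀ = 1 - lam • ρ⁻¹)
    (E : Fin d → Matrix (Fin d) (Fin d) ℂ)
    (hE : ∀ j, E j = (η j * lam) • (ρ⁻¹ * vecMulVec (φ j) (star (φ j)) * ρ⁻¹)) :
    E₀.PosSemidef ∧ (∀ j, (E j).PosSemidef) ∧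
    E₀ + ∑ j, E j = 1 ∧
    (∀ i j, (E i * vecMulVec (φ j) (star (φ j))).trace
      = if i = j then ((lam / η j : ℝ) : ℂ) else 0) ∧
    ∑ j, (η j : ℂ) * (E j * vecMulVec (φ j) (star (φ j))).trace = ((d * lam : ℝ) : ℂ) := by
  -- ρ in complex-smul form
  have hρC : ρ = ∑ j, (η j : ℂ) • vecMulVec (φ j) (star (φ j)) := by
    rw [hρ]; exact Finset.sum_congr rfl fun j _ => ud_real_smul _ _
  -- ρ is positive definite
  have hρpd : ρ.PosDef := by
    refine PosDef.of_dotProduct_mulVec_pos hρher fun x hx => ?_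
    have hq : star x ⬝ᵥ ρ *ᵥ x
        = ∑ j, (η j : ℂ) * ((star (φ j) ⬝ᵥ x) * star (star (φ j) ⬝ᵥ x)) := by
      rw [hρC, ud_sum_mulVec, ud_dotProduct_sum]
      refine Finset.sum_congr rfl fun j _ => ?_
      rw [smul_mulVec, ud_vmv_mulVec, dotProduct_smul, dotProduct_smul, smul_eq_mul,
        smul_eq_mul, show star x ⬝ᵥ φ j = star (star (φ j) ⬝ᵥ x) from star_dotProduct _ _]
    have hex : ∃ j, star (φ j) ⬝ᵥ x ≠ 0 := by
      by_contra h
      push_neg at h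
      apply hx
      haveI : Nonempty (Fin d) := Fin.pos_iff_nonempty.mp hd
      have hcard : Fintype.card (Fin d) = Module.finrank ℂ (Fin d → ℂ) := by
        simp [Module.finrank_fintype_fun_eq_card]
      have hb : ⇑(basisOfLinearIndependentOfCardEqFinrank hind hcard) = φ :=
        coe_basisOfLinearIndependentOfCardEqFinrank hind hcard
      set b := basisOfLinearIndependentOfCardEqFinrank hind hcard
      have hrepr : x = ∑ j, b.repr x j • φ j := by
        conv_lhs => rw [← b.sum_repr x]
        exact Finset.sum_congr rfl fun j _ => by rw [hb]
      have hxx : star x ⬝ᵥ x = 0 := by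
        rw [show star x ⬝ᵥ x = star x ⬝ᵥ (∑ j, b.repr x j • φ j) from by rw [← hrepr]]
        rw [ud_dotProduct_sum]
        refine Finset.sum_eq_zero fun j _ => ?_
        rw [dotProduct_smul, star_dotProduct, h j, star_zero, smul_zero]
      exact dotProduct_star_self_eq_zero.mp hxx
    rw [hq]
    obtain ⟨j0, hj0⟩ := hex
    refine Finset.sum_pos' (fun j _ => ?_) ⟨j0, Finset.mem_univ _, ?_⟩
    · exact mul_nonneg (Complex.zero_le_real.mpr (hη j).le) (mul_star_self_nonneg _)
    · refine mul_pos (Complex.zero_lt_real.mpr (hη j0)) ?_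
      have hmc : star (φ j0) ⬝ᵥ x * star (star (φ j0) ⬝ᵥ x)
          = (Complex.normSq (star (φ j0) ⬝ᵥ x) : ℂ) := Complex.mul_conj _
      rw [hmc]
      exact Complex.zero_lt_real.mpr (Complex.normSq_pos.mpr hj0)
  have hdet : IsUnit ρ.det := isUnit_iff_isUnit_det ρ |>.mp hρpd.isUnit
  have hlampos : 0 < lam := by
    rw [hlam]
    exact (Finset.lt_inf'_iff _).mpr fun i _ => hρpd.eigenvalues_pos i
  -- Gram-type dual relation
  have hg : ∀ i j, star (φ i) ⬝ᵥ (ρ⁻¹ *ᵥ φ j)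
      = if i = j then (((η i)⁻¹ : ℝ) : ℂ) else 0 := by
    intro i j
    have hinv : ρ * ρ⁻¹ = 1 := mul_nonsing_inv _ hdet
    set u := ρ⁻¹ *ᵥ φ j with hu
    have hru : ρ *ᵥ u = φ j := by rw [hu, mulVec_mulVec, hinv, one_mulVec]
    have hexp : ρ *ᵥ u = ∑ k, ((η k : ℂ) * (star (φ k) ⬝ᵥ u)) • φ k := by
      rw [hρC, ud_sum_mulVec]
      refine Finset.sum_congr rfl fun k _ => ?_
      rw [smul_mulVec, ud_vmv_mulVec, smul_smul]
    have hzero : ∑ k, (((η k : ℂ) * (star (φ k) ⬝ᵥ u))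
        - if k = j then 1 else 0) • φ k = 0 := by
      simp only [sub_smul, Finset.sum_sub_distrib, ← hexp, hru, ite_smul, one_smul, zero_smul]
      simp
    have hcoef := Fintype.linearIndependent_iff.mp hind _ hzero i
    rw [sub_eq_zero] at hcoef
    have hηi : (η i : ℂ) ≠ 0 := by exact_mod_cast (hη i).ne'
    by_cases hij : i = j
    · rw [if_pos hij] at hcoef ⊢
      push_cast
      field_simp
      linear_combination hcoef
    · rw [if_neg hij] at hcoef ⊢
      exact (mul_eq_zero.mp hcoef).resolve_left hηi
  -- E₀ is PSD
  have hE0psd : E₀.PosSemidef := by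
    set U : Matrix (Fin d) (Fin d) ℂ := (hρher.eigenvectorUnitary : Matrix (Fin d) (Fin d) ℂ)
      with hUdef
    set μ : Fin d → ℝ := hρher.eigenvalues with hμdef
    have hU1 : U * Uᴴ = 1 := by
      have := Matrix.mem_unitaryGroup_iff.mp hρher.eigenvectorUnitary.2
      simpa [star_eq_conjTranspose] using this
    have hU2 : Uᴴ * U = 1 := by
      have := Matrix.mem_unitaryGroup_iff'.mp hρher.eigenvectorUnitary.2
      simpa [star_eq_conjTranspose] using this
    have hμpos : ∀ i, 0 < μ i := fun i => hρpd.eigenvalues_pos i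
    have hμne : ∀ i, ((μ i : ℝ) : ℂ) ≠ 0 := fun i => by exact_mod_cast (hμpos i).ne'
    have hspec : ρ = U * diagonal (fun i => ((μ i : ℝ) : ℂ)) * Uᴴ := by
      have := hρher.spectral_theorem
      simpa [Function.comp_def, star_eq_conjTranspose] using this
    have hρinv : ρ⁻¹ = U * diagonal (fun i => ((μ i : ℝ) : ℂ)⁻¹) * Uᴴ := by
      apply inv_eq_right_inv
      rw [hspec]
      calc U * diagonal (fun i => ((μ i : ℝ) : ℂ)) * Uᴴ
            * (U * diagonal (fun i => ((μ i : ℝ) : ℂ)⁻¹) * Uᴴ)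
          = U * (diagonal (fun i => ((μ i : ℝ) : ℂ)) * (Uᴴ * U)
            * diagonal (fun i => ((μ i : ℝ) : ℂ)⁻¹)) * Uᴴ := by
            simp only [Matrix.mul_assoc]
        _ = 1 := by
            rw [hU2, Matrix.mul_one, diagonal_mul_diagonal]
            have : (fun i => ((μ i : ℝ) : ℂ) * ((μ i : ℝ) : ℂ)⁻¹) = fun _ => (1 : ℂ) := by
              funext i
              exact mul_inv_cancel₀ (hμne i)
            rw [this, diagonal_one, Matrix.mul_one, hU1]
    have hE0eq : E₀ = U * diagonal (fun i => ((1 - lam * (μ i)⁻¹ : ℝ) : ℂ)) * Uᴴ := by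
      rw [hE0, ud_real_smul, hρinv]
      have h1 : (1 : Matrix (Fin d) (Fin d) ℂ) = U * diagonal (fun _ => (1:ℂ)) * Uᴴ := by
        rw [diagonal_one, Matrix.mul_one, hU1]
      rw [h1, ← show U * ((lam : ℂ) • diagonal (fun i => ((μ i : ℝ) : ℂ)⁻¹)) * Uᴴ
          = (lam : ℂ) • (U * diagonal (fun i => ((μ i : ℝ) : ℂ)⁻¹) * Uᴴ) from by
            rw [Matrix.mul_smul, Matrix.smul_mul],
        ← Matrix.sub_mul, ← Matrix.mul_sub]
      congr 2
      ext i k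
      by_cases hik : i = k
      · subst hik
        simp [Matrix.diagonal_apply_eq]
      · simp [Matrix.diagonal_apply_ne _ hik, hik]
    rw [hE0eq]
    refine (PosSemidef.diagonal fun i => ?_).mul_mul_conjTranspose_same U
    refine Complex.zero_le_real.mpr ?_
    have hle : lam ≤ μ i := hlam ▸ Finset.inf'_le _ (Finset.mem_univ i)
    have := hμpos i
    rw [sub_nonneg, ← div_eq_mul_inv, div_le_one this]
    exact hle
  -- each E j is PSD
  have hEpsd : ∀ j, (E j).PosSemidef := by
    intro j
    rw [hE j, ud_real_smul]
    refine ud_smul_psd (mul_nonneg (hη j).le hlampos.le) ?_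
    have : ρ⁻¹ * vecMulVec (φ j) (star (φ j)) * ρ⁻¹
        = ρ⁻¹ * vecMulVec (φ j) (star (φ j)) * (ρ⁻¹)ᴴ := by
      rw [hρher.inv.eq]
    rw [this]
    exact (ud_vmv_psd (φ j)).mul_mul_conjTranspose_same _
  -- sum of POVM elements
  have hsum1 : E₀ + ∑ j, E j = 1 := by
    have hSE : ∑ j, E j = (lam : ℂ) • ρ⁻¹ := by
      have hEs : ∀ j : Fin d, E j
          = (lam : ℂ) • (ρ⁻¹ * ((η j : ℂ) • vecMulVec (φ j) (star (φ j))) * ρ⁻¹) := by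
        intro j
        rw [hE j, ud_real_smul, Matrix.mul_smul, Matrix.smul_mul, smul_smul]
        push_cast
        ring_nf
      rw [Finset.sum_congr rfl fun j _ => hEs j, ← Finset.smul_sum, ← Finset.sum_mul,
        ← Matrix.mul_sum, ← hρC, nonsing_inv_mul _ hdet, Matrix.one_mul]
    rw [hE0, hSE, ud_real_smul]
    exact sub_add_cancel _ _
  -- trace relation
  have htr : ∀ i j, (E i * vecMulVec (φ j) (star (φ j))).trace
      = if i = j then ((lam / η j : ℝ) : ℂ) else 0 := by
    intro i j
    rw [hE i, ud_real_smul, Matrix.smul_mul, trace_smul]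
    have hmv : (ρ⁻¹ * vecMulVec (φ i) (star (φ i)) * ρ⁻¹) *ᵥ φ j
        = (if i = j then (((η i)⁻¹ : ℝ) : ℂ) else 0) • (ρ⁻¹ *ᵥ φ i) := by
      rw [← Matrix.mulVec_mulVec, ← Matrix.mulVec_mulVec, ud_vmv_mulVec, hg i j,
        Matrix.mulVec_smul]
    rw [ud_mul_vmv, ud_trace_vmv, hmv, smul_dotProduct, dotProduct_comm,
      show star (φ j) ⬝ᵥ (ρ⁻¹ *ᵥ φ i) = _ from hg j i, smul_eq_mul]
    by_cases hij : i = j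
    · subst hij
      rw [smul_eq_mul]
      rw [if_pos (rfl : i = i), if_pos (rfl : i = i)]
      have hηi : (η i : ℝ) ≠ 0 := (hη i).ne'
      push_cast
      field_simp
    · simp [if_neg hij, if_neg (fun h : j = i => hij h.symm)]
  refine ⟨hE0psd, hEpsd, hsum1, htr, ?_⟩
  have hterm : ∀ j : Fin d, (η j : ℂ) * (E j * vecMulVec (φ j) (star (φ j))).trace
      = (lam : ℂ) := by
    intro j
    rw [htr j j, if_pos rfl]
    have : (η j : ℂ) ≠ 0 := by exact_mod_cast (hη j).ne'
    push_cast
    field_simp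
  rw [Finset.sum_congr rfl fun j _ => hterm j]
  push_cast
  simp [Finset.card_univ, mul_comm]
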